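/- Let G be a finite p-group, D = {g ∈ G : [g, G'] ⊆ Z(G)}, Z = G' ∩ Z(G), and rk(G'/Z) = r. Then rk(D/C_G(G')) ≤ 2r². -/

import Mathlib

/-- The rank of a group: the minimal number `r` such that every subgroup
can be generated by `r` elements. -/
noncomputable def grpRank (G : Type*) [Group G] : ℕ :=
  sInf {r : ℕ | ∀ H : Subgroup G, ∃ S : Finset G, S.card ≤ r ∧ Subgroup.closure (S : Set G) = H}

open Subgroup

open scoped commutatorElement

section grpRankAPI

variable {G K : Type*} [Group G] [Group K]

lemma grpRank_mem (G : Type*) [Group G] [Finite G] :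
    ∀ H : Subgroup G, ∃ S : Finset G, S.card ≤ grpRank G ∧ Subgroup.closure (S : Set G) = H := by
  have hne : {r : ℕ | ∀ H : Subgroup G, ∃ S : Finset G,
      S.card ≤ r ∧ Subgroup.closure (S : Set G) = H}.Nonempty := by
    cases nonempty_fintype G
    classical
    refine ⟨Fintype.card G, fun H => ⟨(H : Set G).toFinset, ?_, ?_⟩⟩
    · exact le_trans (Finset.card_le_univ _) (le_of_eq (Finset.card_univ))
    · rw [Set.coe_toFinset, Subgroup.closure_eq]
  exact Nat.sInf_mem hne

lemma grpRank_le (G : Type*) [Group G] (n : ℕ)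
    (h : ∀ H : Subgroup G, ∃ S : Finset G, S.card ≤ n ∧ Subgroup.closure (S : Set G) = H) :
    grpRank G ≤ n :=
  Nat.sInf_le h

lemma grpRank_le_of_injective [Finite K] (f : G →* K) (hf : Function.Injective f) :
    grpRank G ≤ grpRank K := by
  classical
  apply grpRank_le
  intro H
  obtain ⟨S, hcard, hS⟩ := grpRank_mem K (H.map f)
  have hSsub : (S : Set K) ⊆ (H.map f : Set K) := hS ▸ Subgroup.subset_closure
  have hmem : ∀ y : K, y ∈ Subgroup.map f H → ∃ x, x ∈ H ∧ f x = y := by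
    intro y hy; exact Subgroup.mem_map.mp hy
  choose! g hg1 hg2 using hmem
  refine ⟨S.image g, le_trans Finset.card_image_le hcard, ?_⟩
  apply Subgroup.map_injective hf
  rw [MonoidHom.map_closure, Finset.coe_image, ← Set.image_comp]
  have himg : (f ∘ g) '' (S : Set K) = (S : Set K) := by
    apply Set.image_congr (fun y hy => hg2 y (hSsub hy)) |>.trans (Set.image_id _)
  rw [himg, hS]

lemma grpRank_le_of_surjective [Finite G] (f : G →* K) (hf : Function.Surjective f) :
    grpRank K ≤ grpRank G := by
  classical
  apply grpRank_le
  intro H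
  obtain ⟨S, hc, hS⟩ := grpRank_mem G (H.comap f)
  exact ⟨S.image f, le_trans Finset.card_image_le hc, by
    rw [Finset.coe_image, ← MonoidHom.map_closure, hS,
      Subgroup.map_comap_eq_self_of_surjective hf]⟩

lemma grpRank_eq_of_mulEquiv [Finite G] [Finite K] (e : G ≃* K) : grpRank G = grpRank K :=
  le_antisymm (grpRank_le_of_injective e.toMonoidHom e.injective)
    (grpRank_le_of_injective e.symm.toMonoidHom e.symm.injective)

lemma grpRank_of_subsingleton (G : Type*) [Group G] [Subsingleton G] : grpRank G = 0 := by
  refine le_antisymm (grpRank_le G 0 fun H => ⟨∅, le_rfl, ?_⟩) (Nat.zero_le _)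
  ext x
  have hx : x = 1 := Subsingleton.elim x 1
  subst hx
  simp [one_mem]

lemma grpRank_le_add {Q : Type*} [Group Q] [Finite G] [Finite Q] (f : G →* Q) :
    grpRank G ≤ grpRank f.ker + grpRank f.range := by
  classical
  apply grpRank_le
  intro H
  obtain ⟨S₁, hc₁, hS₁⟩ := grpRank_mem f.range ((H.map f).subgroupOf f.range)
  obtain ⟨S₂, hc₂, hS₂⟩ := grpRank_mem f.ker ((H ⊓ f.ker).subgroupOf f.ker)
  have hS₁sub : ∀ y ∈ S₁, (y : Q) ∈ H.map f := by
    intro y hy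
    have : y ∈ Subgroup.closure (S₁ : Set f.range) := Subgroup.subset_closure hy
    rw [hS₁] at this
    exact Subgroup.mem_subgroupOf.mp this
  have hS₂sub : ∀ y ∈ S₂, (y : G) ∈ H ⊓ f.ker := by
    intro y hy
    have : y ∈ Subgroup.closure (S₂ : Set f.ker) := Subgroup.subset_closure hy
    rw [hS₂] at this
    exact Subgroup.mem_subgroupOf.mp this
  have hmem : ∀ y : Q, y ∈ Subgroup.map f H → ∃ x, x ∈ H ∧ f x = y := by
    intro y hy; exact Subgroup.mem_map.mp hy
  choose! g hg1 hg2 using hmem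
  set T₁ : Finset G := S₁.image (fun y : f.range => g (y : Q)) with hT₁
  set T₂ : Finset G := S₂.image (fun x : f.ker => (x : G)) with hT₂
  have hT₁H : ∀ x ∈ T₁, x ∈ H := by
    intro x hx
    rw [hT₁, Finset.mem_image] at hx
    obtain ⟨y, hy, rfl⟩ := hx
    exact hg1 _ (hS₁sub y hy)
  have hT₂H : ∀ x ∈ T₂, x ∈ H := by
    intro x hx
    rw [hT₂, Finset.mem_image] at hx
    obtain ⟨y, hy, rfl⟩ := hx
    exact (Subgroup.mem_inf.mp (hS₂sub y hy)).1
  refine ⟨T₁ ∪ T₂, ?_, ?_⟩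
  · have h1 : T₁.card ≤ grpRank f.range := le_trans Finset.card_image_le hc₁
    have h2 : T₂.card ≤ grpRank f.ker := le_trans Finset.card_image_le hc₂
    have h3 := Finset.card_union_le T₁ T₂
    omega
  · set KK := Subgroup.closure ((T₁ ∪ T₂ : Finset G) : Set G) with hKK
    have hKH : KK ≤ H := by
      rw [hKK, Subgroup.closure_le]
      intro x hx
      rcases Finset.mem_union.mp hx with h | h
      · exact hT₁H x h
      · exact hT₂H x h
    refine le_antisymm hKH ?_
    intro h hh
    have hfh : f h ∈ Subgroup.map f H := Subgroup.mem_map.mpr ⟨h, hh, rfl⟩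
    have hyh : (⟨f h, MonoidHom.mem_range.mpr ⟨h, rfl⟩⟩ : f.range) ∈
        (H.map f).subgroupOf f.range := Subgroup.mem_subgroupOf.mpr hfh
    rw [← hS₁] at hyh
    have hmap : f h ∈ Subgroup.map (f.range.subtype) (Subgroup.closure (S₁ : Set f.range)) :=
      Subgroup.mem_map.mpr ⟨_, hyh, rfl⟩
    rw [MonoidHom.map_closure] at hmap
    have hle : Subgroup.closure (f.range.subtype '' (S₁ : Set f.range)) ≤ Subgroup.map f KK := by
      rw [Subgroup.closure_le]
      rintro y ⟨y', hy', rfl⟩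
      rw [Finset.mem_coe] at hy'
      refine Subgroup.mem_map.mpr ⟨g (y' : Q), ?_, hg2 _ (hS₁sub y' hy')⟩
      refine Subgroup.subset_closure ?_
      refine Finset.mem_union_left _ ?_
      exact Finset.mem_image.mpr ⟨y', hy', rfl⟩
    obtain ⟨w, hwK, hwf⟩ := Subgroup.mem_map.mp (hle hmap)
    have hwH : w ∈ H := hKH hwK
    have hker : h * w⁻¹ ∈ H ⊓ f.ker := by
      refine Subgroup.mem_inf.mpr ⟨mul_mem hh (inv_mem hwH), ?_⟩
      rw [MonoidHom.mem_ker, map_mul, map_inv, hwf]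
      simp
    have hker2 : (⟨h * w⁻¹, (Subgroup.mem_inf.mp hker).2⟩ : f.ker) ∈
        (H ⊓ f.ker).subgroupOf f.ker := Subgroup.mem_subgroupOf.mpr hker
    rw [← hS₂] at hker2
    have hmem2 : h * w⁻¹ ∈ Subgroup.map (f.ker.subtype) (Subgroup.closure (S₂ : Set f.ker)) :=
      Subgroup.mem_map.mpr ⟨_, hker2, rfl⟩
    rw [MonoidHom.map_closure] at hmem2
    have hle2 : Subgroup.closure (f.ker.subtype '' (S₂ : Set f.ker)) ≤ KK := by
      rw [Subgroup.closure_le]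
      rintro y ⟨y', hy', rfl⟩
      rw [Finset.mem_coe] at hy'
      refine Subgroup.subset_closure (Finset.mem_union_right _ ?_)
      exact Finset.mem_image.mpr ⟨y', hy', rfl⟩
    have heq : h = (h * w⁻¹) * w := by group
    rw [heq]
    exact mul_mem (hle2 hmem2) hwK

lemma grpRank_prod {A B : Type*} [Group A] [Group B] [Finite A] [Finite B] :
    grpRank (A × B) ≤ grpRank A + grpRank B := by
  let f : A × B →* B := MonoidHom.snd A B
  refine le_trans (grpRank_le_add f) (Nat.add_le_add ?_ ?_)
  · -- kernel embeds into A
    refine grpRank_le_of_injective ((MonoidHom.fst A B).comp f.ker.subtype) ?_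
    intro x y hxy
    have hx := x.2
    have hy := y.2
    rw [MonoidHom.mem_ker] at hx hy
    apply Subtype.ext
    apply Prod.ext
    · exact hxy
    · change ((x : A × B)).2 = ((y : A × B)).2
      rw [show ((x : A × B)).2 = f x from rfl, show ((y : A × B)).2 = f y from rfl, hx, hy]
  · exact grpRank_le_of_injective f.range.subtype f.range.subtype_injective

lemma grpRank_pi {n : ℕ} (H : Fin n → Type*) [∀ k, Group (H k)] [∀ k, Finite (H k)] :
    grpRank (∀ k, H k) ≤ ∑ k, grpRank (H k) := by
  induction n with
  | zero =>
      rw [grpRank_of_subsingleton]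
      exact Nat.zero_le _
  | succ n ih =>
      set φ : (∀ k : Fin (n+1), H k) →* (∀ k : Fin n, H k.succ) :=
        { toFun := fun x k => x k.succ, map_one' := rfl, map_mul' := fun _ _ => rfl } with hφ
      refine le_trans (grpRank_le_add φ) ?_
      have h1 : grpRank φ.ker ≤ grpRank (H 0) := by
        refine grpRank_le_of_injective ((Pi.evalMonoidHom H 0).comp φ.ker.subtype) ?_
        intro x y hxy
        have hx := x.2
        have hy := y.2
        rw [MonoidHom.mem_ker] at hx hy
        apply Subtype.ext
        funext k
        induction k using Fin.cases with
        | zero => exact hxy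
        | succ j =>
            have hx' : (x : ∀ k, H k) j.succ = 1 := congrFun hx j
            have hy' : (y : ∀ k, H k) j.succ = 1 := congrFun hy j
            rw [hx', hy']
      have h2 : grpRank φ.range ≤ ∑ k : Fin n, grpRank (H k.succ) := by
        refine le_trans (grpRank_le_of_injective φ.range.subtype φ.range.subtype_injective) ?_
        exact ih (fun k => H k.succ)
      calc grpRank φ.ker + grpRank φ.range ≤ grpRank (H 0) + ∑ k : Fin n, grpRank (H k.succ) :=
            Nat.add_le_add h1 h2
        _ = ∑ k : Fin (n+1), grpRank (H k) := (Fin.sum_univ_succ (fun k : Fin (n+1) => grpRank (H k))).symm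

lemma grpRank_range_le {Y Z : Type*} [Group Y] [Group Z] [Finite G] [Finite Y] [Finite Z]
    (f : G →* Y) (h : G →* Z) (hk : h.ker ≤ f.ker) :
    grpRank f.range ≤ grpRank h.range := by
  have e1 := QuotientGroup.quotientKerEquivRange f
  have e2 := QuotientGroup.quotientKerEquivRange h
  have hsurj : Function.Surjective (QuotientGroup.map h.ker f.ker (MonoidHom.id G) hk) := by
    intro y
    obtain ⟨x, rfl⟩ := QuotientGroup.mk_surjective y
    exact ⟨QuotientGroup.mk x, rfl⟩
  calc grpRank f.range = grpRank (G ⧸ f.ker) := (grpRank_eq_of_mulEquiv e1).symm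
    _ ≤ grpRank (G ⧸ h.ker) := grpRank_le_of_surjective _ hsurj
    _ = grpRank h.range := grpRank_eq_of_mulEquiv e2

end grpRankAPI

section Burnside

variable {p : ℕ} [Fact p.Prime] {A : Type*} [Group A] [Finite A]

lemma coatom_facts (hA : IsPGroup p A) {M : Subgroup A} (hM : IsCoatom M) :
    M.Normal ∧ (∀ x y : A, ⁅x, y⁆ ∈ M) ∧ (∀ x : A, x ^ p ∈ M) := by
  haveI hnil : Group.IsNilpotent A := hA.isNilpotent
  have hnc : NormalizerCondition A := normalizerCondition_of_isNilpotent
  have hnorm : M.Normal := Subgroup.NormalizerCondition.normal_of_coatom M hnc hM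
  haveI := hnorm
  refine ⟨hnorm, ?_⟩
  -- subgroups of the quotient are ⊥ or ⊤
  have hsub : ∀ C : Subgroup (A ⧸ M), C = ⊥ ∨ C = ⊤ := by
    intro C
    have hle : M ≤ Subgroup.comap (QuotientGroup.mk' M) C := by
      intro m hm
      have h1 : QuotientGroup.mk' M m = 1 := (QuotientGroup.eq_one_iff m).mpr hm
      rw [Subgroup.mem_comap, h1]
      exact one_mem C
    have hCeq : Subgroup.map (QuotientGroup.mk' M) (Subgroup.comap (QuotientGroup.mk' M) C) = C :=
      Subgroup.map_comap_eq_self_of_surjective (QuotientGroup.mk'_surjective M) C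
    rcases eq_or_lt_of_le hle with heq | hlt
    · left
      rw [← hCeq, ← heq, eq_bot_iff]
      rintro x hx
      obtain ⟨m, hm, rfl⟩ := Subgroup.mem_map.mp hx
      rw [Subgroup.mem_bot]
      exact (QuotientGroup.eq_one_iff m).mpr hm
    · right
      have : Subgroup.comap (QuotientGroup.mk' M) C = ⊤ := hM.2 _ hlt
      rw [← hCeq, this]
      exact Subgroup.map_top_of_surjective _ (QuotientGroup.mk'_surjective M)
  -- the quotient is a p-group, nontrivial
  have hQ : IsPGroup p (A ⧸ M) := hA.to_quotient M
  obtain ⟨a, ha⟩ : ∃ a : A, a ∉ M := by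
    by_contra hcon
    push_neg at hcon
    exact hM.1 ((Subgroup.eq_top_iff' M).mpr hcon)
  -- every element q of the quotient satisfies q ^ p = 1
  have hexp : ∀ q : A ⧸ M, q ^ p = 1 := by
    intro q
    by_cases hq1 : q = 1
    · rw [hq1, one_pow]
    by_contra hqp
    have hzq : Subgroup.zpowers (q ^ p) = ⊤ := by
      rcases hsub (Subgroup.zpowers (q ^ p)) with h | h
      · exact absurd (Subgroup.zpowers_eq_bot.mp h) hqp
      · exact h
    have hqmem : q ∈ Subgroup.zpowers (q ^ p) := by rw [hzq]; trivial
    obtain ⟨m, hm⟩ := Subgroup.mem_zpowers_iff.mp hqmem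
    -- q ^ (p * m - 1) = 1
    have hzpow : q ^ ((p : ℤ) * m - 1) = 1 := by
      have h1 : q ^ ((p : ℤ) * m) = q := by rw [zpow_mul, zpow_natCast, hm]
      rw [zpow_sub, h1, zpow_one]
      simp
    have hdvd : (orderOf q : ℤ) ∣ ((p : ℤ) * m - 1) := orderOf_dvd_iff_zpow_eq_one.mpr hzpow
    -- p divides orderOf q
    obtain ⟨k, hk⟩ := hQ q
    have hodvd : orderOf q ∣ p ^ k := orderOf_dvd_of_pow_eq_one hk
    obtain ⟨j, hj, hjeq⟩ := (Nat.dvd_prime_pow (Fact.out : p.Prime)).mp hodvd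
    have hj1 : 1 ≤ j := by
      rcases Nat.eq_zero_or_pos j with h0 | h0
      · exfalso
        rw [h0, pow_zero] at hjeq
        exact hq1 (orderOf_eq_one_iff.mp hjeq)
      · exact h0
    have hpdvd : (p : ℤ) ∣ (orderOf q : ℤ) := by
      rw [hjeq]
      exact_mod_cast dvd_pow_self p (Nat.one_le_iff_ne_zero.mp hj1)
    have : (p : ℤ) ∣ 1 := by
      have h2 : (p : ℤ) ∣ (p : ℤ) * m := dvd_mul_right _ _
      have h3 : (p : ℤ) ∣ ((p : ℤ) * m - 1) := hpdvd.trans hdvd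
      have h4 : (p : ℤ) ∣ ((p : ℤ) * m - ((p : ℤ) * m - 1)) := dvd_sub h2 h3
      simpa using h4
    have := Int.le_of_dvd one_pos this
    have hp2 := (Fact.out : p.Prime).two_le
    omega
  -- any two elements of the quotient commute
  have hcomm : ∀ q q' : A ⧸ M, Commute q q' := by
    intro q q'
    by_cases hq1 : q = 1
    · rw [hq1]; exact Commute.one_left q'
    have hzq : Subgroup.zpowers q = ⊤ := by
      rcases hsub (Subgroup.zpowers q) with h | h
      · exact absurd (Subgroup.zpowers_eq_bot.mp h) hq1
      · exact h
    have : q' ∈ Subgroup.zpowers q := by rw [hzq]; trivial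
    obtain ⟨m, hm⟩ := Subgroup.mem_zpowers_iff.mp this
    rw [← hm]
    exact (Commute.refl q).zpow_right m
  constructor
  · intro x y
    rw [← QuotientGroup.eq_one_iff]
    have : ((⁅x, y⁆ : A) : A ⧸ M) = ⁅(x : A ⧸ M), (y : A ⧸ M)⁆ :=
      map_commutatorElement (QuotientGroup.mk' M) x y
    rw [this]
    exact commutatorElement_eq_one_iff_commute.mpr (hcomm _ _)
  · intro x
    rw [← QuotientGroup.eq_one_iff]
    have : ((x ^ p : A) : A ⧸ M) = ((x : A ⧸ M)) ^ p := rfl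
    rw [this]
    exact hexp _

lemma frattini_mem (hA : IsPGroup p A) :
    (∀ x y : A, ⁅x, y⁆ ∈ frattini A) ∧ ∀ x : A, x ^ p ∈ frattini A := by
  constructor
  · intro x y
    have h : ∀ M ∈ {H : Subgroup A | IsCoatom H}, ⁅x, y⁆ ∈ M :=
      fun M hM => (coatom_facts hA hM).2.1 x y
    simpa [frattini, Order.radical, Subgroup.mem_iInf] using h
  · intro x
    have h : ∀ M ∈ {H : Subgroup A | IsCoatom H}, x ^ p ∈ M :=
      fun M hM => (coatom_facts hA hM).2.2 x
    simpa [frattini, Order.radical, Subgroup.mem_iInf] using h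

lemma normal_of_comm_le {B : Subgroup A} (hcomm : ∀ x y : A, ⁅x, y⁆ ∈ B) : B.Normal := by
  constructor
  intro b hb g
  have h1 : g * b * g⁻¹ = ⁅g, b⁆ * b := by group
  rw [h1]
  exact mul_mem (hcomm g b) hb

lemma card_sup_singleton_le (hA : IsPGroup p A) {B : Subgroup A} (hB : frattini A ≤ B) (x : A) :
    Nat.card (B ⊔ Subgroup.closure {x} : Subgroup A) ≤ Nat.card B * p := by
  classical
  haveI hBn : B.Normal := normal_of_comm_le (fun a b => hB ((frattini_mem hA).1 a b))
  set π := QuotientGroup.mk' B with hπ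
  set y := π x with hy
  have hyp : y ^ p = 1 := by
    rw [hy, ← map_pow]
    exact (QuotientGroup.eq_one_iff _).mpr (hB ((frattini_mem hA).2 x))
  have hKeq : B ⊔ Subgroup.closure {x} = Subgroup.comap π (Subgroup.zpowers y) := by
    apply le_antisymm
    · refine sup_le ?_ ?_
      · intro b hb
        rw [Subgroup.mem_comap]
        have h1 : π b = 1 := (QuotientGroup.eq_one_iff _).mpr hb
        rw [h1]
        exact one_mem _
      · rw [Subgroup.closure_le]
        intro z hz
        rw [Set.mem_singleton_iff] at hz
        subst hz
        rw [SetLike.mem_coe, Subgroup.mem_comap]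
        exact Subgroup.mem_zpowers y
    · intro z hz
      rw [Subgroup.mem_comap] at hz
      obtain ⟨m, hm⟩ := Subgroup.mem_zpowers_iff.mp hz
      have hmem : z * (x ^ m)⁻¹ ∈ B := by
        apply (QuotientGroup.eq_one_iff _).mp
        show π (z * (x ^ m)⁻¹) = 1
        have h5 : π (z * (x ^ m)⁻¹) = π z * ((π x) ^ m)⁻¹ := by
          rw [map_mul, map_inv, map_zpow]
        rw [h5, ← hy, ← hm]
        simp
      have hzeq : z = (z * (x ^ m)⁻¹) * x ^ m := by group
      rw [hzeq]
      refine mul_mem (Subgroup.mem_sup_left hmem) (Subgroup.mem_sup_right ?_)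
      exact zpow_mem (Subgroup.subset_closure (Set.mem_singleton x)) m
  rw [hKeq]
  have hsec : ∀ q : A ⧸ B, ∃ a : A, π a = q := QuotientGroup.mk'_surjective B
  choose sec hsec using hsec
  set Cp := Subgroup.comap π (Subgroup.zpowers y) with hCp
  have hmem2 : ∀ z : Cp, (z : A) * (sec (π (z : A)))⁻¹ ∈ B := by
    intro z
    apply (QuotientGroup.eq_one_iff _).mp
    show π ((z : A) * (sec (π (z : A)))⁻¹) = 1
    rw [map_mul, map_inv, hsec]
    simp
  have hinj : Function.Injective (fun z : Cp =>
      ((⟨π (z : A), z.2⟩ : Subgroup.zpowers y),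
       (⟨(z : A) * (sec (π (z : A)))⁻¹, hmem2 z⟩ : B))) := by
    intro z₁ z₂ h
    rw [Prod.ext_iff] at h
    obtain ⟨h1, h2⟩ := h
    rw [Subtype.ext_iff] at h1 h2
    simp only at h1 h2
    apply Subtype.ext
    have := congrArg (· * (sec (π (z₂ : A)))) h2
    simp only [inv_mul_cancel_right] at this
    rw [← h1] at this
    simpa [inv_mul_cancel_right] using this
  have hcard := Nat.card_le_card_of_injective _ hinj
  rw [Nat.card_prod] at hcard
  refine le_trans hcard ?_
  rw [mul_comm]
  apply Nat.mul_le_mul_left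
  rw [Nat.card_zpowers]
  exact Nat.le_of_dvd (Fact.out : p.Prime).pos (orderOf_dvd_of_pow_eq_one hyp)

lemma card_closure_sup_frattini_le (hA : IsPGroup p A) (S : Finset A) :
    Nat.card (Subgroup.closure (S : Set A) ⊔ frattini A : Subgroup A) ≤
      p ^ S.card * Nat.card (frattini A) := by
  classical
  induction S using Finset.induction with
  | empty => simp [Subgroup.closure_empty]
  | insert a S ha ih =>
      have hstep := card_sup_singleton_le hA (le_sup_right :
        frattini A ≤ Subgroup.closure (S : Set A) ⊔ frattini A) a
      have heq : Subgroup.closure ((insert a S : Finset A) : Set A) ⊔ frattini A =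
          (Subgroup.closure (S : Set A) ⊔ frattini A) ⊔ Subgroup.closure {a} := by
        rw [Finset.coe_insert, Set.insert_eq, Subgroup.closure_union,
          sup_comm (Subgroup.closure {a}) (Subgroup.closure (S : Set A)), sup_assoc,
          sup_comm (Subgroup.closure {a}) (frattini A), ← sup_assoc]
      rw [heq, Finset.card_insert_of_notMem ha]
      refine le_trans hstep ?_
      calc Nat.card (Subgroup.closure (S : Set A) ⊔ frattini A : Subgroup A) * p
          ≤ (p ^ S.card * Nat.card (frattini A)) * p := Nat.mul_le_mul_right _ ih
        _ = p ^ (S.card + 1) * Nat.card (frattini A) := by ring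

lemma proper_subgroup_card_lt (hA : IsPGroup p A) {B C : Subgroup A} (hBC : B ≤ C)
    (hne : ¬ C ≤ B) : Nat.card B * p ≤ Nat.card C := by
  have hdvd : Nat.card B ∣ Nat.card C := Subgroup.card_dvd_of_le hBC
  obtain ⟨d, hd⟩ := hdvd
  have hd1 : d ≠ 1 := by
    intro h1
    rw [h1, mul_one] at hd
    -- equal cards force equality
    have : (B.subgroupOf C) = ⊤ := by
      apply Subgroup.eq_top_of_card_eq
      have e := (Subgroup.subgroupOfEquivOfLe hBC).toEquiv
      rw [Nat.card_congr e, ← hd]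
    exact hne (Subgroup.subgroupOf_eq_top.mp this)
  -- d divides the order of A, a power of p
  obtain ⟨n, hn⟩ := IsPGroup.iff_card.mp hA
  have hCdvd : Nat.card C ∣ p ^ n := by
    have h6 : Nat.card C ∣ Nat.card A := Subgroup.card_subgroup_dvd_card C
    rwa [hn] at h6
  have hddvd : d ∣ p ^ n := dvd_trans (Dvd.intro_left _ hd.symm) hCdvd
  obtain ⟨j, hj, hjeq⟩ := (Nat.dvd_prime_pow (Fact.out : p.Prime)).mp hddvd
  have hj1 : 1 ≤ j := by
    rcases Nat.eq_zero_or_pos j with h0 | h0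
    · exfalso; rw [h0, pow_zero] at hjeq; exact hd1 hjeq
    · exact h0
  have hpd : p ≤ d := by
    rw [hjeq]
    calc p = p ^ 1 := (pow_one p).symm
      _ ≤ p ^ j := Nat.pow_le_pow_right (Fact.out : p.Prime).pos hj1
  rw [hd]
  exact Nat.mul_le_mul_left _ hpd

lemma burnside_extract (hA : IsPGroup p A) {r : ℕ}
    (hgen : ∃ S : Finset A, S.card ≤ r ∧ Subgroup.closure (S : Set A) = ⊤)
    (T : Set A) (hT : Subgroup.closure T = ⊤) :
    ∃ T₀ : Finset A, ↑T₀ ⊆ T ∧ T₀.card ≤ r ∧ Subgroup.closure (↑T₀ : Set A) = ⊤ := by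
  classical
  haveI : IsCoatomic (Subgroup A) := Finite.to_isCoatomic
  -- it suffices to find T₀ with closure T₀ ⊔ frattini = ⊤
  suffices h : ∃ T₀ : Finset A, ↑T₀ ⊆ T ∧ T₀.card ≤ r ∧
      Subgroup.closure (↑T₀ : Set A) ⊔ frattini A = ⊤ by
    obtain ⟨T₀, h1, h2, h3⟩ := h
    exact ⟨T₀, h1, h2, frattini_nongenerating h3⟩
  -- upper bound for the order of A
  obtain ⟨S₀, hS₀c, hS₀⟩ := hgen
  have hAle : Nat.card A ≤ p ^ r * Nat.card (frattini A) := by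
    have h1 := card_closure_sup_frattini_le hA S₀
    rw [hS₀, top_sup_eq, Subgroup.card_top] at h1
    refine le_trans h1 (Nat.mul_le_mul_right _ ?_)
    exact Nat.pow_le_pow_right (Fact.out : p.Prime).pos hS₀c
  -- greedy construction
  have hstep : ∀ n : ℕ, ∃ T₀ : Finset A, ↑T₀ ⊆ T ∧ T₀.card ≤ n ∧
      (Subgroup.closure (↑T₀ : Set A) ⊔ frattini A = ⊤ ∨
        p ^ n * Nat.card (frattini A) ≤
          Nat.card (Subgroup.closure (↑T₀ : Set A) ⊔ frattini A : Subgroup A)) := by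
    intro n
    induction n with
    | zero =>
        refine ⟨∅, by simp, le_rfl, Or.inr ?_⟩
        simp [Subgroup.closure_empty]
    | succ n ih =>
        obtain ⟨T₀, h1, h2, h3⟩ := ih
        rcases h3 with h3 | h3
        · exact ⟨T₀, h1, le_trans h2 (Nat.le_succ n), Or.inl h3⟩
        set K := Subgroup.closure (↑T₀ : Set A) ⊔ frattini A with hK
        by_cases htop : K = ⊤
        · exact ⟨T₀, h1, le_trans h2 (Nat.le_succ n), Or.inl htop⟩
        -- find t ∈ T outside K
        have hex : ∃ t ∈ T, t ∉ K := by
          by_contra hcon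
          push_neg at hcon
          apply htop
          rw [eq_top_iff, ← hT, Subgroup.closure_le]
          intro t ht
          exact hcon t ht
        obtain ⟨t, htT, htK⟩ := hex
        refine ⟨insert t T₀, ?_, ?_, Or.inr ?_⟩
        · rw [Finset.coe_insert]
          exact Set.insert_subset htT h1
        · refine le_trans (Finset.card_insert_le _ _) (Nat.succ_le_succ h2)
        · set K' := Subgroup.closure (↑(insert t T₀) : Set A) ⊔ frattini A with hK'
          have hKK' : K ≤ K' := by
            rw [hK, hK']
            refine sup_le_sup_right (Subgroup.closure_mono ?_) _
            rw [Finset.coe_insert]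
            exact Set.subset_insert _ _
          have htK' : t ∈ K' := by
            rw [hK']
            refine Subgroup.mem_sup_left (Subgroup.subset_closure ?_)
            rw [Finset.coe_insert]
            exact Set.mem_insert _ _
          have hne : ¬ K' ≤ K := fun hle => htK (hle htK')
          have := proper_subgroup_card_lt hA hKK' hne
          calc p ^ (n + 1) * Nat.card (frattini A)
              = (p ^ n * Nat.card (frattini A)) * p := by ring
            _ ≤ Nat.card K * p := Nat.mul_le_mul_right _ h3
            _ = Nat.card K * p := rfl
            _ ≤ Nat.card K' := by rw [mul_comm] at this ⊢; exact this
  -- conclude at n = r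
  obtain ⟨T₀, h1, h2, h3⟩ := hstep r
  rcases h3 with h3 | h3
  · exact ⟨T₀, h1, h2, h3⟩
  · refine ⟨T₀, h1, h2, ?_⟩
    have hle : Nat.card (Subgroup.closure (↑T₀ : Set A) ⊔ frattini A : Subgroup A) ≤ Nat.card A :=
      le_trans (Nat.card_le_card_of_injective _ Subtype.val_injective) le_rfl
    apply Subgroup.eq_top_of_card_eq
    omega

end Burnside

section CentralComm

variable {G : Type*} [Group G]

lemma central_conj {z : G} (hz : z ∈ Subgroup.center G) (w : G) : z * w * z⁻¹ = w := by
  rw [← Subgroup.mem_center_iff.mp hz w]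
  group

lemma central_conj' {z : G} (hz : z ∈ Subgroup.center G) (x : G) : x * z * x⁻¹ = z := by
  rw [Subgroup.mem_center_iff.mp hz x]
  group

lemma comm_central_left {z : G} (hz : z ∈ Subgroup.center G) (u v : G) :
    ⁅z * u, v⁆ = ⁅u, v⁆ := by
  have h := central_conj hz (u * v * u⁻¹)
  calc ⁅z * u, v⁆ = (z * (u * v * u⁻¹) * z⁻¹) * v⁻¹ := by simp only [commutatorElement_def]; group
    _ = (u * v * u⁻¹) * v⁻¹ := by rw [h]
    _ = ⁅u, v⁆ := by simp only [commutatorElement_def]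

lemma comm_central_right {z : G} (hz : z ∈ Subgroup.center G) (u v : G) :
    ⁅u, z * v⁆ = ⁅u, v⁆ := by
  have h := comm_central_left hz v u
  calc ⁅u, z * v⁆ = ⁅z * v, u⁆⁻¹ := by rw [commutatorElement_inv]
    _ = ⁅v, u⁆⁻¹ := by rw [h]
    _ = ⁅u, v⁆ := by rw [commutatorElement_inv]

lemma comm_comm_eq_one {g a b : G} (ha : ⁅g, a⁆ ∈ Subgroup.center G)
    (hb : ⁅g, b⁆ ∈ Subgroup.center G) : ⁅g, ⁅a, b⁆⁆ = 1 := by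
  have h1 : g * a * g⁻¹ = ⁅g, a⁆ * a := by simp only [commutatorElement_def]; group
  have h2 : g * b * g⁻¹ = ⁅g, b⁆ * b := by simp only [commutatorElement_def]; group
  have h3 : g * ⁅a, b⁆ * g⁻¹ = ⁅g * a * g⁻¹, g * b * g⁻¹⁆ := by simp only [commutatorElement_def]; group
  have h4 : g * ⁅a, b⁆ * g⁻¹ = ⁅a, b⁆ := by
    rw [h3, h1, h2, comm_central_left ha, comm_central_right hb]
  rw [commutatorElement_eq_one_iff_commute]
  show g * ⁅a, b⁆ = ⁅a, b⁆ * g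
  conv_rhs => rw [← h4]
  group

lemma comm_mul_mem_center {g h a : G}
    (h1 : ⁅g, ⁅h, a⁆⁆ ∈ Subgroup.center G)
    (h2 : ⁅⁅g, a⁆⁻¹, ⁅h, a⁆⁻¹⁆ ∈ Subgroup.center G) :
    ⁅g * h, a⁆⁻¹ * (⁅g, a⁆ * ⁅h, a⁆) ∈ Subgroup.center G := by
  have hx := Subgroup.mem_center_iff.mp (inv_mem h1) (⁅g, a⁆⁻¹ * ⁅h, a⁆⁻¹)
  have e1 : ⁅g * h, a⁆⁻¹ * (⁅g, a⁆ * ⁅h, a⁆) =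
      (⁅g, a⁆⁻¹ * ⁅h, a⁆⁻¹) * ⁅g, ⁅h, a⁆⁆⁻¹ * (⁅g, a⁆ * ⁅h, a⁆) := by simp only [commutatorElement_def]; group
  rw [e1, hx]
  have e2 : ⁅g, ⁅h, a⁆⁆⁻¹ * (⁅g, a⁆⁻¹ * ⁅h, a⁆⁻¹) * (⁅g, a⁆ * ⁅h, a⁆) =
      ⁅g, ⁅h, a⁆⁆⁻¹ * ⁅⁅g, a⁆⁻¹, ⁅h, a⁆⁻¹⁆ := by simp only [commutatorElement_def]; group
  rw [e2]
  exact mul_mem (inv_mem h1) h2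

lemma comm_psi_mul {g h c : G} (hg : ⁅g, c⁆ ∈ Subgroup.center G)
    (hh : ⁅h, c⁆ ∈ Subgroup.center G) : ⁅g * h, c⁆ = ⁅g, c⁆ * ⁅h, c⁆ := by
  have e1 : ⁅g * h, c⁆ = (g * ⁅h, c⁆ * g⁻¹) * ⁅g, c⁆ := by simp only [commutatorElement_def]; group
  rw [e1, central_conj' hh g]
  exact (Subgroup.mem_center_iff.mp hh ⁅g, c⁆).symm

end CentralComm

theorem stmt_19 (p : ℕ) [Fact p.Prime] (G : Type*) [Group G] [Finite G]
    (hp : IsPGroup p G)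
    (D : Subgroup G)
    (hD : ∀ g : G, g ∈ D ↔ ∀ h ∈ commutator G, ⁅g, h⁆ ∈ Subgroup.center G)
    (r : ℕ)
    (hr : grpRank (commutator G ⧸ (Subgroup.center G).subgroupOf (commutator G)) = r) :
    grpRank (D ⧸ (Subgroup.centralizer (commutator G : Set G)).subgroupOf D) ≤ 2 * r ^ 2 := by
  classical
  set NA : Subgroup (commutator G) := (Subgroup.center G).subgroupOf (commutator G) with hNA
  -- membership of commutators in the commutator subgroup
  have memGc : ∀ x y : G, ⁅x, y⁆ ∈ commutator G := by
    intro x y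
    rw [commutator_def]
    exact Subgroup.commutator_mem_commutator (Subgroup.mem_top x) (Subgroup.mem_top y)
  -- D is closed under conjugation
  have hDnormal : ∀ g ∈ D, ∀ x : G, x * g * x⁻¹ ∈ D := by
    intro g hg x
    rw [hD]
    intro c hc
    have h1 : ⁅x * g * x⁻¹, c⁆ = x * ⁅g, x⁻¹ * c * x⁆ * x⁻¹ := by
      simp only [commutatorElement_def]; group
    have hcc : x⁻¹ * c * x ∈ commutator G := by
      have h2 := Subgroup.Normal.conj_mem (inferInstance : (commutator G).Normal) c hc x⁻¹
      simpa using h2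
    have hz := (hD g).mp hg _ hcc
    rw [h1]
    exact Subgroup.Normal.conj_mem (inferInstance : (Subgroup.center G).Normal) _ hz x
  have hcommD : ∀ g ∈ D, ∀ a : G, ⁅g, a⁆ ∈ D := by
    intro g hg a
    have h1 : ⁅g, a⁆ = g * (a * g * a⁻¹)⁻¹ := by
      simp only [commutatorElement_def]; group
    have h2 := mul_mem hg (inv_mem (hDnormal g hg a))
    rwa [← h1] at h2
  -- the homomorphism theta a : D →* commutator G ⧸ NA
  have theta_comp : ∀ (a : G) (g h : ↥D),
      (QuotientGroup.mk' NA ⟨⁅((g * h : ↥D) : G), a⁆, memGc _ _⟩ : commutator G ⧸ NA) =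
        QuotientGroup.mk' NA ⟨⁅(g : G), a⁆, memGc _ _⟩ *
          QuotientGroup.mk' NA ⟨⁅(h : G), a⁆, memGc _ _⟩ := by
    intro a g h
    rw [← map_mul]
    apply (QuotientGroup.mk'_eq_mk' NA).mpr
    refine ⟨(⟨⁅((g * h : ↥D) : G), a⁆, memGc _ _⟩ : ↥(commutator G))⁻¹ *
        (⟨⁅(g : G), a⁆, memGc _ _⟩ * ⟨⁅(h : G), a⁆, memGc _ _⟩), ?_, by group⟩
    rw [hNA, Subgroup.mem_subgroupOf]
    have hmem : (((⟨⁅((g * h : ↥D) : G), a⁆, memGc _ _⟩ : ↥(commutator G))⁻¹ *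
        (⟨⁅(g : G), a⁆, memGc _ _⟩ * ⟨⁅(h : G), a⁆, memGc _ _⟩) : ↥(commutator G)) : G) =
        ⁅(g : G) * (h : G), a⁆⁻¹ * (⁅(g : G), a⁆ * ⁅(h : G), a⁆) := by
      push_cast
      simp only [commutatorElement_def]
    rw [hmem]
    have hc1 : ⁅(g : G), ⁅(h : G), a⁆⁆ ∈ Subgroup.center G :=
      (hD (g : G)).mp g.2 _ (memGc _ _)
    have hc2 : ⁅⁅(g : G), a⁆⁻¹, ⁅(h : G), a⁆⁻¹⁆ ∈ Subgroup.center G := by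
      refine (hD _).mp (inv_mem (hcommD _ g.2 a)) _ (inv_mem (memGc _ _))
    exact comm_mul_mem_center hc1 hc2
  let theta : G → (↥D →* (commutator G ⧸ NA)) := fun a =>
    MonoidHom.mk' (fun g => QuotientGroup.mk' NA ⟨⁅(g : G), a⁆, memGc _ _⟩) (theta_comp a)
  -- the homomorphism psi c : D →* G for c in the commutator subgroup
  let psi : ↥(commutator G) → (↥D →* G) := fun c =>
    MonoidHom.mk' (fun g => ⁅(g : G), (c : G)⁆) (by
      intro g h
      show ⁅((g * h : ↥D) : G), (c : G)⁆ = _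
      rw [Subgroup.coe_mul]
      exact comm_psi_mul ((hD _).mp g.2 _ c.2) ((hD _).mp h.2 _ c.2))
  -- generators of the quotient by commutators
  have hpA : IsPGroup p (commutator G ⧸ NA) := (hp.to_subgroup (commutator G)).to_quotient NA
  have hgen : ∃ S : Finset (commutator G ⧸ NA), S.card ≤ r ∧
      Subgroup.closure (S : Set (commutator G ⧸ NA)) = ⊤ := by
    obtain ⟨S, h1, h2⟩ := grpRank_mem (commutator G ⧸ NA) ⊤
    exact ⟨S, by rw [← hr]; exact h1, h2⟩
  set S'' : Set ↥(commutator G) := {v | ∃ a b : G, (v : G) = ⁅a, b⁆} with hS''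
  have hS''top : Subgroup.closure S'' = (⊤ : Subgroup ↥(commutator G)) := by
    apply Subgroup.map_injective (commutator G).subtype_injective
    rw [MonoidHom.map_closure]
    have himg : (commutator G).subtype '' S'' = commutatorSet G := by
      ext y
      constructor
      · rintro ⟨v, ⟨a, b, hv⟩, rfl⟩
        exact ⟨a, b, hv.symm⟩
      · rintro ⟨a, b, rfl⟩
        exact ⟨⟨⁅a, b⁆, memGc a b⟩, ⟨a, b, rfl⟩, rfl⟩
    rw [himg, ← commutator_eq_closure]
    have htop : Subgroup.map (commutator G).subtype ⊤ = commutator G := by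
      conv_rhs => rw [← Subgroup.range_subtype (commutator G), MonoidHom.range_eq_map]
    rw [htop]
  set T : Set (commutator G ⧸ NA) := (QuotientGroup.mk' NA) '' S'' with hT
  have hTtop : Subgroup.closure T = ⊤ := by
    rw [hT, ← MonoidHom.map_closure, hS''top]
    exact Subgroup.map_top_of_surjective _ (QuotientGroup.mk'_surjective NA)
  obtain ⟨T₀, hT₀sub, hT₀card, hT₀top⟩ := burnside_extract hpA hgen T hTtop
  set s := T₀.card with hs
  set e := T₀.equivFin with he
  set cindex : Fin s → (commutator G ⧸ NA) := fun i => ((e.symm i : ↥(T₀ : Finset _)) : _) with hcindex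
  have hch : ∀ i : Fin s, ∃ a b : G, ∃ hab : ⁅a, b⁆ ∈ commutator G,
      QuotientGroup.mk' NA ⟨⁅a, b⁆, hab⟩ = cindex i := by
    intro i
    have hmem : cindex i ∈ T := hT₀sub (e.symm i).2
    obtain ⟨v, hvS, hveq⟩ := hmem
    obtain ⟨a, b, hv⟩ := hvS
    refine ⟨a, b, hv ▸ v.2, ?_⟩
    have hveq2 : (⟨⁅a, b⁆, hv ▸ v.2⟩ : ↥(commutator G)) = v := Subtype.ext hv.symm
    rw [hveq2]
    exact hveq
  choose af bf hcm hmkeq using hch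
  set cG : Fin s → ↥(commutator G) := fun i => ⟨⁅af i, bf i⁆, hcm i⟩ with hcG
  -- the big homomorphism Phi
  let Phi : ↥D →* (Fin s → G) := MonoidHom.mk' (fun g i => ⁅(g : G), (cG i : G)⁆) (by
    intro g h
    funext i
    exact map_mul (psi (cG i)) g h)
  -- identification of the kernel
  have hker : Phi.ker = (Subgroup.centralizer (commutator G : Set G)).subgroupOf D := by
    apply le_antisymm
    · intro g hg
      rw [MonoidHom.mem_ker] at hg
      rw [Subgroup.mem_subgroupOf]
      -- the subgroup generated by the cG i together with NA is everything
      have himg : (QuotientGroup.mk' NA) '' (Set.range cG) = (T₀ : Set (commutator G ⧸ NA)) := by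
        ext q
        constructor
        · rintro ⟨v, ⟨i, rfl⟩, rfl⟩
          have : QuotientGroup.mk' NA (cG i) = cindex i := hmkeq i
          rw [this]
          exact (e.symm i).2
        · intro hq
          refine ⟨cG (e ⟨q, hq⟩), ⟨e ⟨q, hq⟩, rfl⟩, ?_⟩
          rw [hmkeq (e ⟨q, hq⟩)]
          show ((e.symm (e ⟨q, hq⟩) : ↥(T₀ : Finset _)) : (commutator G ⧸ NA)) = q
          rw [Equiv.symm_apply_apply]
      have hsup : Subgroup.closure (Set.range cG) ⊔ NA = (⊤ : Subgroup ↥(commutator G)) := by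
        have h1 : Subgroup.map (QuotientGroup.mk' NA) (Subgroup.closure (Set.range cG)) = ⊤ := by
          rw [MonoidHom.map_closure, himg, hT₀top]
        have h2 := congrArg (Subgroup.comap (QuotientGroup.mk' NA)) h1
        rw [Subgroup.comap_map_eq, QuotientGroup.ker_mk'] at h2
        rw [h2]
        exact Subgroup.comap_top _
      set L : Subgroup ↥(commutator G) :=
        Subgroup.comap (commutator G).subtype (Subgroup.centralizer {(g : G)}) with hL
      have hLtop : (⊤ : Subgroup ↥(commutator G)) ≤ L := by
        rw [← hsup]
        refine sup_le ?_ ?_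
        · rw [Subgroup.closure_le]
          rintro v ⟨i, rfl⟩
          rw [hL, SetLike.mem_coe, Subgroup.mem_comap]
          rw [Subgroup.mem_centralizer_iff]
          intro y hy
          rw [Set.mem_singleton_iff] at hy
          subst hy
          have hgi : ⁅(g : G), (cG i : G)⁆ = 1 := congrFun hg i
          exact commutatorElement_eq_one_iff_commute.mp hgi
        · intro v hv
          rw [hNA, Subgroup.mem_subgroupOf] at hv
          rw [hL, Subgroup.mem_comap, Subgroup.mem_centralizer_iff]
          intro y hy
          rw [Set.mem_singleton_iff] at hy
          subst hy
          exact Subgroup.mem_center_iff.mp hv _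
      rw [Subgroup.mem_centralizer_iff]
      intro y hy
      have hyL := hLtop (Subgroup.mem_top (⟨y, hy⟩ : ↥(commutator G)))
      rw [hL, Subgroup.mem_comap, Subgroup.mem_centralizer_iff] at hyL
      have := hyL (g : G) (Set.mem_singleton _)
      exact this.symm
    · intro g hg
      rw [Subgroup.mem_subgroupOf] at hg
      rw [MonoidHom.mem_ker]
      funext i
      have hcomm : ((cG i : G)) * (g : G) = (g : G) * (cG i : G) :=
        Subgroup.mem_centralizer_iff.mp hg _ (cG i).2
      show ⁅(g : G), (cG i : G)⁆ = 1
      exact commutatorElement_eq_one_iff_commute.mpr hcomm.symm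
  -- ranks
  have hWle : ∀ i : Fin s, grpRank (psi (cG i)).range ≤ 2 * r := by
    intro i
    set Theta : ↥D →* (commutator G ⧸ NA) × (commutator G ⧸ NA) :=
      (theta (af i)).prod (theta (bf i)) with hTheta
    have hkk : Theta.ker ≤ (psi (cG i)).ker := by
      intro g hg
      rw [MonoidHom.mem_ker] at hg ⊢
      have h1 : theta (af i) g = 1 := congrArg Prod.fst hg
      have h2 : theta (bf i) g = 1 := congrArg Prod.snd hg
      have hz1 : ⁅(g : G), af i⁆ ∈ Subgroup.center G := by
        have := (QuotientGroup.eq_one_iff _).mp h1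
        rwa [hNA, Subgroup.mem_subgroupOf] at this
      have hz2 : ⁅(g : G), bf i⁆ ∈ Subgroup.center G := by
        have := (QuotientGroup.eq_one_iff _).mp h2
        rwa [hNA, Subgroup.mem_subgroupOf] at this
      show ⁅(g : G), (cG i : G)⁆ = 1
      exact comm_comm_eq_one hz1 hz2
    calc grpRank (psi (cG i)).range ≤ grpRank Theta.range := grpRank_range_le _ _ hkk
      _ ≤ grpRank ((commutator G ⧸ NA) × (commutator G ⧸ NA)) :=
          grpRank_le_of_injective Theta.range.subtype Theta.range.subtype_injective
      _ ≤ grpRank (commutator G ⧸ NA) + grpRank (commutator G ⧸ NA) := grpRank_prod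
      _ = 2 * r := by rw [hr]; ring
  -- assemble
  have e0 : (D ⧸ (Subgroup.centralizer (commutator G : Set G)).subgroupOf D) ≃* (↥D ⧸ Phi.ker) :=
    QuotientGroup.quotientMulEquivOfEq hker.symm
  have e1 : (↥D ⧸ Phi.ker) ≃* Phi.range := QuotientGroup.quotientKerEquivRange Phi
  have hle1 : Phi.range ≤ Subgroup.pi Set.univ (fun i => (psi (cG i)).range) := by
    rintro x ⟨g, rfl⟩
    rw [Subgroup.mem_pi]
    intro i _
    exact ⟨g, rfl⟩
  let J : ↥(Subgroup.pi Set.univ (fun i => (psi (cG i)).range)) →*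
      (∀ i : Fin s, ↥((psi (cG i)).range)) :=
    { toFun := fun x i => ⟨(x : Fin s → G) i, by
        have hx := x.2
        rw [Subgroup.mem_pi] at hx
        exact hx i (Set.mem_univ i)⟩
      map_one' := rfl
      map_mul' := fun _ _ => rfl }
  have hJinj : Function.Injective J := by
    intro x y hxy
    apply Subtype.ext
    funext i
    have := congrFun hxy i
    exact congrArg Subtype.val this
  calc grpRank (D ⧸ (Subgroup.centralizer (commutator G : Set G)).subgroupOf D)
      = grpRank (↥D ⧸ Phi.ker) := grpRank_eq_of_mulEquiv e0
    _ = grpRank Phi.range := grpRank_eq_of_mulEquiv e1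
    _ ≤ grpRank (Subgroup.pi Set.univ (fun i => (psi (cG i)).range)) :=
        grpRank_le_of_injective (Subgroup.inclusion hle1) (Subgroup.inclusion_injective hle1)
    _ ≤ grpRank (∀ i : Fin s, ↥((psi (cG i)).range)) := grpRank_le_of_injective J hJinj
    _ ≤ ∑ i : Fin s, grpRank ((psi (cG i)).range) := grpRank_pi _
    _ ≤ ∑ _i : Fin s, 2 * r := Finset.sum_le_sum (fun i _ => hWle i)
    _ = s * (2 * r) := by rw [Finset.sum_const, Finset.card_univ, Fintype.card_fin, smul_eq_mul]
    _ ≤ r * (2 * r) := Nat.mul_le_mul_right _ hT₀card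
    _ = 2 * r ^ 2 := by ring
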